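/- Let λ ∈ ℕ, λ ≥ 2, and m = 2λ. Let a : ℤ → ℝ be a finitely supported mask and let φ : ℝ → ℝ be a continuous, compactly supported function satisfying φ(x) = Σ_{k∈ℤ} a_k φ(mx − k + 1/2) for all x ∈ ℝ, with |φ(x)| + |φ̂(x)| ≤ C(1 + |x|)^{−1−ε} for some C, ε > 0. Then φ(n) = δ_{0,n} for all n ∈ ℤ if and only if for every ω ∈ ℝ, writing z = e^{−πiω}, the identity 1/2 + Σ_{γ=0}^{m−1} Φ_{2,2γ+1}(z^m) = m z^{−1} Σ_{γ=0}^{m−1} ( A_{m/2−γ}(z²) + A_{m−γ}(z²) ) Φ_{2,2γ+1}(z) holds. -/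

import Mathlib

/-- The Fourier transform `φ̂(ω) = ∫ φ(x) e^{-2πixω} dx`. -/
noncomputable def fourierT (φ : ℝ → ℝ) (ω : ℝ) : ℂ :=
  ∫ x : ℝ, (φ x : ℂ) * Complex.exp (-(2 * (Real.pi : ℂ) * Complex.I * (x : ℂ) * (ω : ℂ)))

/-- The Laurent polynomial `Φ_{T,n}(z) = (1/T) Σ_k φ(mk + n/T) z^(mTk+n)`. -/
noncomputable def PhiSub (φ : ℝ → ℝ) (m T : ℕ) (n : ℤ) (z : ℂ) : ℂ :=
  (T : ℂ)⁻¹ * ∑ᶠ k : ℤ, (φ ((m : ℝ) * (k : ℝ) + (n : ℝ) / (T : ℝ)) : ℂ) * z ^ ((m : ℤ) * (T : ℤ) * k + n)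

/-- The sub-symbol `A_n(z) = (1/m) Σ_k a_{mk+n} z^(mk+n)` of the mask `a`
(notice `A_{n+m} = A_n`, so integer indices like `m/2 - γ` and `m - γ` make sense). -/
noncomputable def ASub (a : ℤ → ℝ) (m : ℕ) (n : ℤ) (z : ℂ) : ℂ :=
  (m : ℂ)⁻¹ * ∑ᶠ k : ℤ, (a ((m : ℤ) * k + n) : ℂ) * z ^ ((m : ℤ) * k + n)

open Function

/-- abs trick: `|k| ≤ |m*k|` for `1 ≤ m`. -/
lemma abs_le_abs_mul_self (m k : ℤ) (hm : 1 ≤ m) : |k| ≤ |m * k| := by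
  rw [abs_mul]
  calc |k| = 1 * |k| := (one_mul _).symm
    _ ≤ |m| * |k| := by
      apply mul_le_mul_of_nonneg_right _ (abs_nonneg k)
      rw [abs_of_nonneg (by omega : (0:ℤ) ≤ m)]; omega

/-- injectivity of `(k, γ) ↦ m k + γ` for `0 ≤ γ, γ' < m`. -/
lemma residue_inj {m k k' γ γ' : ℤ} (hγ : 0 ≤ γ) (hγm : γ < m) (hγ' : 0 ≤ γ') (hγm' : γ' < m)
    (h : m * k + γ = m * k' + γ') : k = k' ∧ γ = γ' := by
  have hmod : γ = γ' := by
    have h1 : (γ + m * k) % m = γ := by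
      rw [Int.add_mul_emod_self_left, Int.emod_eq_of_lt hγ hγm]
    have h2 : (γ' + m * k') % m = γ' := by
      rw [Int.add_mul_emod_self_left, Int.emod_eq_of_lt hγ' hγm']
    rw [← h1, ← h2]
    congr 1
    linarith
  constructor
  · have hm0 : m ≠ 0 := by omega
    have : m * k = m * k' := by omega
    exact mul_left_cancel₀ hm0 this
  · exact hmod

/-- Decomposition of a finite sum over `ℤ` into residues mod `m`. -/
lemma finsum_int_residue {M : Type*} [AddCommGroup M] {m : ℕ} (hm : 0 < m) (f : ℤ → M)
    (hf : (Function.support f).Finite) :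
    ∑ᶠ j : ℤ, f j = ∑ γ ∈ Finset.range m, ∑ᶠ k : ℤ, f ((m : ℤ) * k + (γ : ℤ)) := by
  classical
  set B : ℕ := hf.toFinset.sup Int.natAbs with hB
  have hbound : ∀ j : ℤ, f j ≠ 0 → |j| ≤ (B : ℤ) := by
    intro j hj
    have : j.natAbs ≤ B := Finset.le_sup (f := Int.natAbs) (hf.mem_toFinset.2 hj)
    rw [Int.abs_eq_natAbs]; exact_mod_cast this
  have hm1 : (1 : ℤ) ≤ (m : ℤ) := by exact_mod_cast hm
  set K : Finset ℤ := Finset.Icc (-(B : ℤ) - m) ((B : ℤ) + m) with hK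
  -- inner finsums are sums over K
  have hinner : ∀ γ ∈ Finset.range m, ∑ᶠ k : ℤ, f ((m : ℤ) * k + (γ : ℤ))
      = ∑ k ∈ K, f ((m : ℤ) * k + (γ : ℤ)) := by
    intro γ hγ
    apply finsum_eq_finset_sum_of_support_subset
    intro k hk
    have h1 : |(m : ℤ) * k + (γ : ℤ)| ≤ (B : ℤ) := hbound _ hk
    have hγm : (γ : ℤ) < m := by exact_mod_cast Finset.mem_range.mp hγ
    have hγ0 : (0 : ℤ) ≤ (γ : ℤ) := Int.ofNat_nonneg γ
    have h2 : |(m : ℤ) * k| ≤ (B : ℤ) + m := by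
      have := abs_add_le ((m : ℤ) * k + (γ : ℤ)) (-(γ : ℤ))
      simp only [add_neg_cancel_right] at this
      rw [abs_neg] at this
      have hγabs : |(γ : ℤ)| ≤ (m : ℤ) := by rw [abs_of_nonneg hγ0]; omega
      linarith
    have h3 : |k| ≤ (B : ℤ) + m := le_trans (abs_le_abs_mul_self m k hm1) h2
    simp only [hK, Finset.coe_Icc, Set.mem_Icc]
    have := abs_le.mp h3
    omega
  rw [Finset.sum_congr rfl hinner, ← Finset.sum_product']
  -- now RHS is a sum over (range m) ×ˢ K
  set e : ℕ × ℤ → ℤ := fun p => (m : ℤ) * p.2 + p.1 with he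
  have hinj : ∀ p ∈ Finset.range m ×ˢ K, ∀ q ∈ Finset.range m ×ˢ K, e p = e q → p = q := by
    intro p hp q hq hpq
    simp only [Finset.mem_product, Finset.mem_range] at hp hq
    have h1 : ((p.1 : ℤ)) < m := by exact_mod_cast hp.1
    have h2 : ((q.1 : ℤ)) < m := by exact_mod_cast hq.1
    obtain ⟨hk, hγ⟩ := residue_inj (Int.ofNat_nonneg p.1) h1 (Int.ofNat_nonneg q.1) h2 hpq
    have : p.1 = q.1 := by exact_mod_cast hγ
    exact Prod.ext this hk
  have himg : ∑ p ∈ Finset.range m ×ˢ K, f (e p)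
      = ∑ j ∈ (Finset.range m ×ˢ K).image e, f j := (Finset.sum_image hinj).symm
  have hsubset : Function.support f ⊆ ((Finset.range m ×ˢ K).image e : Set ℤ) := by
    intro j hj
    have hjB := hbound j hj
    have habs := abs_le.mp hjB
    simp only [Finset.coe_image, Set.mem_image, Finset.mem_coe, Finset.mem_product,
      Finset.mem_range, he]
    refine ⟨((j % m).toNat, j / m), ?_, ?_⟩
    · have hmod0 : 0 ≤ j % (m : ℤ) := Int.emod_nonneg _ (by omega)
      have hmodm : j % (m : ℤ) < m := Int.emod_lt_of_pos _ (by omega)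
      constructor
      · omega
      · show (j / (m:ℤ)) ∈ K
        have heq : (m : ℤ) * (j / m) = j - j % m := by
          have := Int.mul_ediv_add_emod j m
          linarith
        have hb : |(m : ℤ) * (j / m)| ≤ (B : ℤ) + m := by
          rw [heq]
          have := abs_sub_abs_le_abs_sub j (j % (m:ℤ))
          have h5 : |j - j % (m:ℤ)| ≤ |j| + |j % (m:ℤ)| := abs_sub j (j % (m:ℤ))
          have h6 : |j % (m:ℤ)| ≤ (m : ℤ) := by rw [abs_of_nonneg hmod0]; omega
          linarith
        have := abs_le.mp (le_trans (abs_le_abs_mul_self m (j / m) hm1) hb)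
        simp only [hK, Finset.mem_Icc]
        omega
    · show (m:ℤ) * (j / (m:ℤ)) + (((j % (m:ℤ)).toNat : ℕ) : ℤ) = j
      have := Int.mul_ediv_add_emod j m
      have hmod0 : 0 ≤ j % (m : ℤ) := Int.emod_nonneg _ (by omega)
      omega
  rw [finsum_eq_finset_sum_of_support_subset f hsubset]
  exact himg.symm

/-- A periodic function is invariant under adding integer multiples of the period. -/
lemma periodic_int_shift {M : Type*} {H : ℤ → M} {m : ℕ}
    (hH : ∀ x : ℤ, H (x + m) = H x) (k : ℤ) (x : ℤ) : H (x + m * k) = H x := by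
  induction k using Int.induction_on with
  | zero => simp
  | succ n ih =>
    have h1 : x + (m : ℤ) * ((n : ℤ) + 1) = (x + m * n) + m := by ring
    rw [h1, hH, ih]
  | pred n ih =>
    have h1 : x + (m : ℤ) * (-(n : ℤ)) = (x + m * (-(n : ℤ) - 1)) + m := by ring
    rw [← ih, h1, hH]

lemma periodic_emod {M : Type*} {H : ℤ → M} {m : ℕ} (hm : 0 < m)
    (hH : ∀ x : ℤ, H (x + m) = H x) (x : ℤ) : H x = H (x % m) := by
  have h1 : x % (m : ℤ) = x + (m : ℤ) * (-(x / m)) := by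
    have := Int.mul_ediv_add_emod x m
    linarith
  rw [h1, periodic_int_shift hH]

/-- Reflected sums of periodic functions over a full period. -/
lemma periodic_sum_reflect {M : Type*} [AddCommMonoid M] {H : ℤ → M} {m : ℕ} (hm : 0 < m)
    (hH : ∀ x : ℤ, H (x + m) = H x) (c : ℤ) :
    ∑ γ ∈ Finset.range m, H (c - γ) = ∑ γ ∈ Finset.range m, H (γ : ℤ) := by
  have hmz : (m : ℤ) ≠ 0 := by omega
  have hmem : ∀ x : ℤ, ((x % (m : ℤ)).toNat) ∈ Finset.range m := by
    intro x
    have h0 : 0 ≤ x % (m : ℤ) := Int.emod_nonneg _ hmz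
    have h1 : x % (m : ℤ) < m := Int.emod_lt_of_pos _ (by omega)
    simp only [Finset.mem_range]
    omega
  have hinv : ∀ γ ∈ Finset.range m, ((c - (((c - (γ:ℤ)) % (m:ℤ)).toNat : ℤ)) % (m:ℤ)).toNat = γ := by
    intro γ hγ
    have hγm : (γ : ℤ) < m := by exact_mod_cast Finset.mem_range.mp hγ
    have h0 : 0 ≤ (c - (γ:ℤ)) % (m:ℤ) := Int.emod_nonneg _ hmz
    have hdm : (c - (γ:ℤ)) % (m:ℤ) = (c - γ) - (m:ℤ) * ((c - γ) / m) := by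
      have := Int.mul_ediv_add_emod (c - (γ:ℤ)) m
      linarith
    have h1 : (c - (((c - (γ:ℤ)) % (m:ℤ)).toNat : ℤ)) = (γ : ℤ) + (m:ℤ) * ((c - γ) / m) := by
      rw [Int.toNat_of_nonneg h0, hdm]; ring
    rw [h1, Int.add_mul_emod_self_left,
      Int.emod_eq_of_lt (Int.ofNat_nonneg γ) hγm, Int.toNat_natCast]
  refine Finset.sum_nbij' (fun γ => ((c - (γ:ℤ)) % (m:ℤ)).toNat)
    (fun γ => ((c - (γ:ℤ)) % (m:ℤ)).toNat) (fun γ _ => hmem _) (fun γ _ => hmem _)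
    hinv hinv ?_
  intro γ hγ
  rw [periodic_emod hm hH (c - γ)]
  congr 1
  exact (Int.toNat_of_nonneg (Int.emod_nonneg _ hmz)).symm

/-- Shift reindex for `finsum` over `ℤ`. -/
lemma finsum_int_shift {M : Type*} [AddCommMonoid M] (f : ℤ → M) (d : ℤ) :
    ∑ᶠ k : ℤ, f (k + d) = ∑ᶠ k : ℤ, f k :=
  finsum_comp_equiv (Equiv.addRight d) (f := f)

/-- Support of lattice samples of a compactly supported function is finite. -/
lemma lattice_support_finite (φ : ℝ → ℝ) (hφs : HasCompactSupport φ) (d : ℝ) :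
    (Function.support fun j : ℤ => φ ((j : ℝ) + d)).Finite := by
  obtain ⟨R, hR⟩ : ∃ R : ℝ, ∀ x : ℝ, φ x ≠ 0 → |x| ≤ R := by
    obtain ⟨R, hR⟩ := hφs.isCompact.isBounded.subset_closedBall 0
    refine ⟨R, fun x hx => ?_⟩
    have := hR (subset_tsupport φ hx)
    simpa [Real.dist_eq] using this
  apply Set.Finite.subset (Set.finite_Icc (⌊-(R + |d|)⌋) (⌈R + |d|⌉))
  intro j hj
  have h1 : |(j : ℝ) + d| ≤ R := hR _ hj
  have h2 : |(j : ℝ)| ≤ R + |d| := by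
    have := abs_add_le ((j : ℝ) + d) (-d)
    simp only [add_neg_cancel_right, abs_neg] at this
    linarith
  obtain ⟨h3, h4⟩ := abs_le.mp h2
  constructor
  · have : (⌊-(R + |d|)⌋ : ℝ) ≤ (j : ℝ) := le_trans (Int.floor_le _) h3
    exact_mod_cast this
  · have : (j : ℝ) ≤ (⌈R + |d|⌉ : ℝ) := le_trans h4 (Int.le_ceil _)
    exact_mod_cast this

/-- `z^n` raised to integer power. -/
lemma pow_zpow (z : ℂ) (n : ℕ) (e : ℤ) : (z ^ n) ^ e = z ^ ((n : ℤ) * e) := by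
  rw [zpow_mul, zpow_natCast]

noncomputable def Fc (φ : ℝ → ℝ) : ℤ → ℂ := fun j => ((φ ((j : ℝ) + 1 / 2) : ℝ) : ℂ)

noncomputable def Ac (a : ℤ → ℝ) : ℤ → ℂ := fun k => ((a k : ℝ) : ℂ)

noncomputable def Gc (φ : ℝ → ℝ) : ℤ → ℂ := fun n => ((φ (n : ℝ) : ℝ) : ℂ)

lemma Fc_support_finite (φ : ℝ → ℝ) (hφs : HasCompactSupport φ) :
    (Function.support (Fc φ)).Finite := by
  apply (lattice_support_finite φ hφs (1 / 2)).subset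
  intro j hj
  simp only [Function.mem_support, Fc] at *
  exact fun h => hj (by rw [h]; exact Complex.ofReal_zero)

lemma Gc_support_finite (φ : ℝ → ℝ) (hφs : HasCompactSupport φ) :
    (Function.support (Gc φ)).Finite := by
  apply (lattice_support_finite φ hφs 0).subset
  intro j hj
  simp only [Function.mem_support, Gc] at *
  intro h
  norm_num at h
  exact hj (by rw [h]; exact Complex.ofReal_zero)

lemma Ac_support_finite (a : ℤ → ℝ) (ha : (Function.support a).Finite) :
    (Function.support (Ac a)).Finite := by
  apply ha.subset
  intro k hk
  simp only [Function.mem_support, Ac] at *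
  exact fun h => hk (by rw [h]; exact Complex.ofReal_zero)

lemma comp_support_finite {f : ℤ → ℂ} (hf : (Function.support f).Finite) {g : ℤ → ℤ}
    (hg : Function.Injective g) : (Function.support fun k => f (g k)).Finite := by
  have : (Function.support fun k => f (g k)) = g ⁻¹' Function.support f := rfl
  rw [this]
  exact hf.preimage hg.injOn

lemma mul_support_finite_left {f g : ℤ → ℂ} (hf : (Function.support f).Finite) :
    (Function.support fun k => f k * g k).Finite :=
  hf.subset (Function.support_mul_subset_left f g)

/-- Rewriting `PhiSub` at odd index `2γ+1` in terms of `Fc`. -/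
lemma PhiSub_odd (φ : ℝ → ℝ) (m : ℕ) (γ : ℤ) (z : ℂ) :
    PhiSub φ m 2 (2 * γ + 1) z
      = (2 : ℂ)⁻¹ * ∑ᶠ j : ℤ, Fc φ ((m : ℤ) * j + γ) * z ^ (2 * ((m : ℤ) * j + γ) + 1) := by
  unfold PhiSub
  congr 1
  apply finsum_congr
  intro k
  have h1 : (m : ℝ) * (k : ℝ) + ((2 * γ + 1 : ℤ) : ℝ) / ((2 : ℕ) : ℝ)
      = (((m : ℤ) * k + γ : ℤ) : ℝ) + 1 / 2 := by push_cast; ring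
  have h2 : (m : ℤ) * ((2 : ℕ) : ℤ) * k + (2 * γ + 1) = 2 * ((m : ℤ) * k + γ) + 1 := by
    push_cast; ring
  rw [h1, h2]
  rfl

/-- Rewriting `ASub` at `z^2`. -/
lemma ASub_sq (a : ℤ → ℝ) (m : ℕ) (n : ℤ) (z : ℂ) :
    ASub a m n (z ^ 2)
      = (m : ℂ)⁻¹ * ∑ᶠ k : ℤ, Ac a ((m : ℤ) * k + n) * z ^ (2 * ((m : ℤ) * k + n)) := by
  unfold ASub
  congr 1
  apply finsum_congr
  intro k
  rw [pow_zpow, show ((2 : ℕ) : ℤ) * ((m : ℤ) * k + n) = 2 * ((m : ℤ) * k + n) by norm_num]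
  rfl

/-- Claim 1: LHS sum of `PhiSub` at `z^m`. -/
lemma claim1 (φ : ℝ → ℝ) (hφs : HasCompactSupport φ) (m : ℕ) (hm0 : 0 < m) (z : ℂ) :
    ∑ γ ∈ Finset.range m, PhiSub φ m 2 (2 * (γ : ℤ) + 1) (z ^ m)
      = (2 : ℂ)⁻¹ * ∑ᶠ j : ℤ, Fc φ j * z ^ ((m : ℤ) * (2 * j + 1)) := by
  set g : ℤ → ℂ := fun j => Fc φ j * z ^ ((m : ℤ) * (2 * j + 1)) with hg
  have hgsupp : (Function.support g).Finite :=
    mul_support_finite_left (Fc_support_finite φ hφs)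
  have hstep : ∀ γ ∈ Finset.range m,
      PhiSub φ m 2 (2 * (γ : ℤ) + 1) (z ^ m)
        = (2 : ℂ)⁻¹ * ∑ᶠ k : ℤ, g ((m : ℤ) * k + (γ : ℤ)) := by
    intro γ _
    rw [PhiSub_odd]
    congr 1
    apply finsum_congr
    intro k
    simp only [hg]
    rw [pow_zpow]
  rw [Finset.sum_congr rfl hstep, ← Finset.mul_sum]
  congr 1
  exact (finsum_int_residue hm0 g hgsupp).symm

/-- finsum is zero if all terms vanish (helper). -/
lemma finsum_zero_of_forall {f : ℤ → ℂ} (h : ∀ x, f x = 0) : ∑ᶠ x, f x = 0 := by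
  rw [finsum_congr h]
  exact finsum_zero

/-- Support in `s` of the convolution-type inner sum is finite. -/
lemma inner_support_finite (m : ℕ) (hm0 : 0 < m) {A B : ℤ → ℂ}
    (hA : (Function.support A).Finite) (hB : (Function.support B).Finite) (c γ : ℤ) :
    (Function.support fun s : ℤ =>
      ∑ᶠ k : ℤ, A ((m : ℤ) * k + c) * B ((m : ℤ) * (s - k) + γ)).Finite := by
  apply Set.Finite.subset (((hA.prod hB).image
    (fun p : ℤ × ℤ => (p.1 + p.2 - c - γ) / (m : ℤ))))
  intro s hs
  simp only [Function.mem_support] at hs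
  have : ∃ k : ℤ, A ((m : ℤ) * k + c) * B ((m : ℤ) * (s - k) + γ) ≠ 0 := by
    by_contra hcon
    push_neg at hcon
    exact hs (finsum_zero_of_forall hcon)
  obtain ⟨k, hk⟩ := this
  have hx : A ((m : ℤ) * k + c) ≠ 0 := fun h => hk (by rw [h, zero_mul])
  have hy : B ((m : ℤ) * (s - k) + γ) ≠ 0 := fun h => hk (by rw [h, mul_zero])
  refine ⟨((m : ℤ) * k + c, (m : ℤ) * (s - k) + γ), ⟨hx, hy⟩, ?_⟩
  have h1 : ((m : ℤ) * k + c) + ((m : ℤ) * (s - k) + γ) - c - γ = (m : ℤ) * s := by ring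
  simp only [h1]
  exact Int.mul_ediv_cancel_left s (by omega)

/-- Support in `s` of the final convolution sum is finite. -/
lemma inner_support_finite2 (m : ℕ) (hm0 : 0 < m) {A B : ℤ → ℂ}
    (hA : (Function.support A).Finite) (hB : (Function.support B).Finite) (c : ℤ) :
    (Function.support fun s : ℤ => ∑ᶠ k : ℤ, A k * B ((m : ℤ) * s + c - k)).Finite := by
  apply Set.Finite.subset (((hA.prod hB).image
    (fun p : ℤ × ℤ => (p.1 + p.2 - c) / (m : ℤ))))
  intro s hs
  simp only [Function.mem_support] at hs
  have : ∃ k : ℤ, A k * B ((m : ℤ) * s + c - k) ≠ 0 := by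
    by_contra hcon
    push_neg at hcon
    exact hs (finsum_zero_of_forall hcon)
  obtain ⟨k, hk⟩ := this
  have hx : A k ≠ 0 := fun h => hk (by rw [h, zero_mul])
  have hy : B ((m : ℤ) * s + c - k) ≠ 0 := fun h => hk (by rw [h, mul_zero])
  refine ⟨(k, (m : ℤ) * s + c - k), ⟨hx, hy⟩, ?_⟩
  have h1 : k + ((m : ℤ) * s + c - k) - c = (m : ℤ) * s := by ring
  simp only [h1]
  exact Int.mul_ediv_cancel_left s (by omega)

lemma affine_inj (m : ℤ) (hm : m ≠ 0) (b : ℤ) : Function.Injective fun k : ℤ => m * k + b := by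
  intro x y h
  simp only [add_left_inj] at h
  exact mul_left_cancel₀ hm h

lemma finsum_int_shift_sub {M : Type*} [AddCommMonoid M] (f : ℤ → M) (d : ℤ) :
    ∑ᶠ k : ℤ, f (k - d) = ∑ᶠ k : ℤ, f k :=
  finsum_comp_equiv (Equiv.subRight d) (f := f)

/-- The main computation for the right-hand side, for a general shift `c`. -/
lemma Dlemma (m : ℕ) (hm0 : 0 < m) (a : ℤ → ℝ) (ha : (Function.support a).Finite)
    (φ : ℝ → ℝ) (hφs : HasCompactSupport φ) (z : ℂ) (hz : z ≠ 0) (c : ℤ) :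
    (m : ℂ) * z⁻¹ * ∑ γ ∈ Finset.range m,
        ASub a m (c - (γ : ℤ)) (z ^ 2) * PhiSub φ m 2 (2 * (γ : ℤ) + 1) z
      = (2 : ℂ)⁻¹ * ∑ᶠ s : ℤ,
          (∑ᶠ k : ℤ, Ac a k * Fc φ ((m : ℤ) * s + c - k)) * z ^ (2 * (m : ℤ) * s + 2 * c) := by
  have hA := Ac_support_finite a ha
  have hF := Fc_support_finite φ hφs
  have hmZ : (m : ℤ) ≠ 0 := by omega
  have hmC : (m : ℂ) ≠ 0 := by exact_mod_cast (by omega : (m : ℕ) ≠ 0)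
  -- step 1: closed form for each γ
  have hstep : ∀ γ ∈ Finset.range m,
      ASub a m (c - (γ : ℤ)) (z ^ 2) * PhiSub φ m 2 (2 * (γ : ℤ) + 1) z
        = (m : ℂ)⁻¹ * (2 : ℂ)⁻¹ * ∑ᶠ s : ℤ,
            (∑ᶠ k : ℤ, Ac a ((m : ℤ) * k + (c - (γ : ℤ))) * Fc φ ((m : ℤ) * (s - k) + (γ : ℤ)))
              * z ^ (2 * (m : ℤ) * s + 2 * c + 1) := by
    intro γ _
    rw [ASub_sq, PhiSub_odd]
    set u : ℤ → ℂ := fun k => Ac a ((m : ℤ) * k + (c - (γ : ℤ)))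
      * z ^ (2 * ((m : ℤ) * k + (c - (γ : ℤ)))) with hu
    set v : ℤ → ℂ := fun j => Fc φ ((m : ℤ) * j + (γ : ℤ))
      * z ^ (2 * ((m : ℤ) * j + (γ : ℤ)) + 1) with hv
    have husupp : (Function.support u).Finite :=
      mul_support_finite_left (comp_support_finite hA (affine_inj _ hmZ _))
    have hvsupp : (Function.support v).Finite :=
      mul_support_finite_left (comp_support_finite hF (affine_inj _ hmZ _))
    have hprod : (∑ᶠ k : ℤ, u k) * (∑ᶠ j : ℤ, v j) = ∑ᶠ k : ℤ, ∑ᶠ j : ℤ, u k * v j := by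
      rw [finsum_mul _ _]
      exact finsum_congr fun k => mul_finsum _ _
    -- inner reindex j ↦ s - k and power combination
    have h1 : ∀ k : ℤ, ∑ᶠ j : ℤ, u k * v j
        = ∑ᶠ s : ℤ, (Ac a ((m : ℤ) * k + (c - (γ : ℤ))) * Fc φ ((m : ℤ) * (s - k) + (γ : ℤ)))
            * z ^ (2 * (m : ℤ) * s + 2 * c + 1) := by
      intro k
      rw [← finsum_int_shift_sub (fun j => u k * v j) k]
      apply finsum_congr
      intro s
      simp only [hu, hv]
      rw [mul_mul_mul_comm, ← zpow_add₀ hz]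
      congr 2
      ring
    -- swap the two sums
    set T : ℤ → ℤ → ℂ := fun k s =>
      (Ac a ((m : ℤ) * k + (c - (γ : ℤ))) * Fc φ ((m : ℤ) * (s - k) + (γ : ℤ)))
        * z ^ (2 * (m : ℤ) * s + 2 * c + 1) with hT
    have hTs : ∀ k : ℤ, (Function.support fun s => T k s).Finite := by
      intro k
      apply Set.Finite.subset (comp_support_finite hF
        (show Function.Injective fun s : ℤ => (m : ℤ) * (s - k) + (γ : ℤ) by
          intro x y h
          simp only [add_left_inj] at h
          have := mul_left_cancel₀ hmZ h
          omega))
      intro s hs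
      simp only [Function.mem_support] at hs ⊢
      intro h0
      exact hs (by rw [hT]; simp only [h0, mul_zero, zero_mul])
    set K : Finset ℤ := (comp_support_finite hA (affine_inj (m : ℤ) hmZ (c - (γ : ℤ)))).toFinset
      with hK
    have houter : (Function.support fun k => ∑ᶠ s : ℤ, T k s) ⊆ ↑K := by
      intro k hk
      simp only [Function.mem_support] at hk
      simp only [hK, Set.Finite.coe_toFinset, Function.mem_support]
      intro h0
      apply hk
      apply finsum_zero_of_forall
      intro s
      rw [hT]
      simp only [h0, zero_mul]
    have hTk : ∀ s : ℤ, (Function.support fun k => T k s) ⊆ ↑K := by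
      intro s k hk
      simp only [Function.mem_support] at hk
      simp only [hK, Set.Finite.coe_toFinset, Function.mem_support]
      intro h0
      exact hk (by rw [hT]; simp only [h0, zero_mul])
    calc ((m : ℂ)⁻¹ * ∑ᶠ k : ℤ, u k) * ((2 : ℂ)⁻¹ * ∑ᶠ j : ℤ, v j)
        = (m : ℂ)⁻¹ * (2 : ℂ)⁻¹ * ((∑ᶠ k : ℤ, u k) * (∑ᶠ j : ℤ, v j)) := by ring
      _ = (m : ℂ)⁻¹ * (2 : ℂ)⁻¹ * ∑ᶠ k : ℤ, ∑ᶠ s : ℤ, T k s := by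
          rw [hprod, finsum_congr h1]
      _ = (m : ℂ)⁻¹ * (2 : ℂ)⁻¹ * ∑ k ∈ K, ∑ᶠ s : ℤ, T k s := by
          rw [finsum_eq_finset_sum_of_support_subset _ houter]
      _ = (m : ℂ)⁻¹ * (2 : ℂ)⁻¹ * ∑ᶠ s : ℤ, ∑ k ∈ K, T k s := by
          rw [sum_finsum_comm _ _ fun k _ => hTs k]
      _ = (m : ℂ)⁻¹ * (2 : ℂ)⁻¹ * ∑ᶠ s : ℤ,
            (∑ᶠ k : ℤ, Ac a ((m : ℤ) * k + (c - (γ : ℤ))) * Fc φ ((m : ℤ) * (s - k) + (γ : ℤ)))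
              * z ^ (2 * (m : ℤ) * s + 2 * c + 1) := by
          congr 1
          apply finsum_congr
          intro s
          rw [← finsum_eq_finset_sum_of_support_subset _ (hTk s)]
          simp only [hT]
          rw [finsum_mul _ _]
  -- step 2: sum over γ, swap with the s-finsum, and apply residue + periodicity
  rw [Finset.sum_congr rfl hstep, ← Finset.mul_sum]
  have hWs : ∀ γ ∈ Finset.range m, (Function.support fun s : ℤ =>
      (∑ᶠ k : ℤ, Ac a ((m : ℤ) * k + (c - (γ : ℤ))) * Fc φ ((m : ℤ) * (s - k) + (γ : ℤ)))
        * z ^ (2 * (m : ℤ) * s + 2 * c + 1)).Finite := by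
    intro γ _
    exact mul_support_finite_left (inner_support_finite m hm0 hA hF _ _)
  rw [sum_finsum_comm _ _ hWs]
  -- per-s: collect the γ-sum
  have hpers : ∀ s : ℤ, ∑ γ ∈ Finset.range m,
      (∑ᶠ k : ℤ, Ac a ((m : ℤ) * k + (c - (γ : ℤ))) * Fc φ ((m : ℤ) * (s - k) + (γ : ℤ)))
        * z ^ (2 * (m : ℤ) * s + 2 * c + 1)
      = (∑ᶠ k : ℤ, Ac a k * Fc φ ((m : ℤ) * s + c - k)) * z ^ (2 * (m : ℤ) * s + 2 * c + 1) := by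
    intro s
    rw [← Finset.sum_mul]
    congr 1
    -- the convolution identity
    set H : ℤ → ℂ := fun t => ∑ᶠ k : ℤ, Ac a ((m : ℤ) * k + t) * Fc φ ((m : ℤ) * (s - k) + (c - t))
      with hH
    have hHper : ∀ t : ℤ, H (t + m) = H t := by
      intro t
      simp only [hH]
      rw [← finsum_int_shift (fun k => Ac a ((m : ℤ) * k + t) * Fc φ ((m : ℤ) * (s - k) + (c - t))) 1]
      apply finsum_congr
      intro k
      congr 2 <;> ring
    have hHval : ∀ γ : ℤ, H (c - γ)
        = ∑ᶠ k : ℤ, Ac a ((m : ℤ) * k + (c - γ)) * Fc φ ((m : ℤ) * (s - k) + γ) := by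
      intro γ
      simp only [hH]
      apply finsum_congr
      intro k
      congr 2
      ring
    have hres : ∑ᶠ k : ℤ, Ac a k * Fc φ ((m : ℤ) * s + c - k)
        = ∑ γ ∈ Finset.range m, H (γ : ℤ) := by
      rw [finsum_int_residue hm0 (fun k => Ac a k * Fc φ ((m : ℤ) * s + c - k))
        (mul_support_finite_left hA)]
      apply Finset.sum_congr rfl
      intro γ _
      simp only [hH]
      apply finsum_congr
      intro k
      congr 2
      ring
    calc ∑ γ ∈ Finset.range m,
          ∑ᶠ k : ℤ, Ac a ((m : ℤ) * k + (c - (γ : ℤ))) * Fc φ ((m : ℤ) * (s - k) + (γ : ℤ))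
        = ∑ γ ∈ Finset.range m, H (c - (γ : ℤ)) := by
          exact Finset.sum_congr rfl fun γ _ => (hHval (γ : ℤ)).symm
      _ = ∑ γ ∈ Finset.range m, H (γ : ℤ) := periodic_sum_reflect hm0 hHper c
      _ = ∑ᶠ k : ℤ, Ac a k * Fc φ ((m : ℤ) * s + c - k) := hres.symm
  rw [finsum_congr hpers]
  -- final bookkeeping with the powers of z
  have hzp : ∀ s : ℤ, (∑ᶠ k : ℤ, Ac a k * Fc φ ((m : ℤ) * s + c - k))
        * z ^ (2 * (m : ℤ) * s + 2 * c + 1)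
      = ((∑ᶠ k : ℤ, Ac a k * Fc φ ((m : ℤ) * s + c - k)) * z ^ (2 * (m : ℤ) * s + 2 * c)) * z := by
    intro s
    rw [zpow_add₀ hz, zpow_one]
    ring
  rw [finsum_congr hzp]
  rw [← finsum_mul _ z]
  field_simp

lemma ofReal_finsum {f : ℤ → ℝ} (hf : (Function.support f).Finite) :
    ((∑ᶠ k : ℤ, f k : ℝ) : ℂ) = ∑ᶠ k : ℤ, ((f k : ℝ) : ℂ) :=
  AddMonoidHom.map_finsum_of_injective Complex.ofRealHom.toAddMonoidHom
    Complex.ofReal_injective _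

/-- Refinement identity at half-integers. -/
lemma refine_half (m lam : ℕ) (hm : m = 2 * lam) (a : ℤ → ℝ)
    (ha : (Function.support a).Finite) (φ : ℝ → ℝ)
    (href : ∀ x : ℝ, φ x = ∑ᶠ k : ℤ, a k * φ ((m : ℝ) * x - (k : ℝ) + 1 / 2)) (s : ℤ) :
    ∑ᶠ k : ℤ, Ac a k * Fc φ ((m : ℤ) * s + (lam : ℤ) - k) = Fc φ s := by
  have hsupp : (Function.support fun k : ℤ =>
      a k * φ ((m : ℝ) * ((s : ℝ) + 1 / 2) - (k : ℝ) + 1 / 2)).Finite :=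
    ha.subset (Function.support_mul_subset_left _ _)
  have hcast : ∀ k : ℤ, (m : ℝ) * ((s : ℝ) + 1 / 2) - (k : ℝ) + 1 / 2
      = (((m : ℤ) * s + (lam : ℤ) - k : ℤ) : ℝ) + 1 / 2 := by
    intro k; push_cast [hm]; ring
  calc ∑ᶠ k : ℤ, Ac a k * Fc φ ((m : ℤ) * s + (lam : ℤ) - k)
      = ∑ᶠ k : ℤ, ((a k * φ ((m : ℝ) * ((s : ℝ) + 1 / 2) - (k : ℝ) + 1 / 2) : ℝ) : ℂ) := by
        apply finsum_congr
        intro k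
        rw [hcast k]
        simp [Ac, Fc]
    _ = ((∑ᶠ k : ℤ, a k * φ ((m : ℝ) * ((s : ℝ) + 1 / 2) - (k : ℝ) + 1 / 2) : ℝ) : ℂ) :=
        (ofReal_finsum hsupp).symm
    _ = ((φ ((s : ℝ) + 1 / 2) : ℝ) : ℂ) := by rw [← href ((s : ℝ) + 1 / 2)]
    _ = Fc φ s := rfl

/-- Refinement identity at integers. -/
lemma refine_int (m : ℕ) (a : ℤ → ℝ)
    (ha : (Function.support a).Finite) (φ : ℝ → ℝ)
    (href : ∀ x : ℝ, φ x = ∑ᶠ k : ℤ, a k * φ ((m : ℝ) * x - (k : ℝ) + 1 / 2)) (s : ℤ) :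
    ∑ᶠ k : ℤ, Ac a k * Fc φ ((m : ℤ) * s + (m : ℤ) - k) = Gc φ (s + 1) := by
  have hsupp : (Function.support fun k : ℤ =>
      a k * φ ((m : ℝ) * ((s : ℝ) + 1) - (k : ℝ) + 1 / 2)).Finite :=
    ha.subset (Function.support_mul_subset_left _ _)
  have hcast : ∀ k : ℤ, (m : ℝ) * ((s : ℝ) + 1) - (k : ℝ) + 1 / 2
      = (((m : ℤ) * s + (m : ℤ) - k : ℤ) : ℝ) + 1 / 2 := by
    intro k; push_cast; ring
  calc ∑ᶠ k : ℤ, Ac a k * Fc φ ((m : ℤ) * s + (m : ℤ) - k)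
      = ∑ᶠ k : ℤ, ((a k * φ ((m : ℝ) * ((s : ℝ) + 1) - (k : ℝ) + 1 / 2) : ℝ) : ℂ) := by
        apply finsum_congr
        intro k
        rw [hcast k]
        simp [Ac, Fc]
    _ = ((∑ᶠ k : ℤ, a k * φ ((m : ℝ) * ((s : ℝ) + 1) - (k : ℝ) + 1 / 2) : ℝ) : ℂ) :=
        (ofReal_finsum hsupp).symm
    _ = ((φ ((s : ℝ) + 1) : ℝ) : ℂ) := by rw [← href ((s : ℝ) + 1)]
    _ = Gc φ (s + 1) := by
        simp only [Gc]
        norm_num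

/-- injectivity of `θ ↦ exp(θ i)` on `(0,1)`. -/
lemma exp_injOn_Ioo : Set.InjOn (fun θ : ℝ => Complex.exp ((θ : ℂ) * Complex.I))
    (Set.Ioo (0 : ℝ) 1) := by
  intro x hx y hy hxy
  rw [Complex.exp_eq_exp_iff_exists_int] at hxy
  obtain ⟨k, hk⟩ := hxy
  have him := congrArg Complex.im hk
  simp only [Complex.mul_im, Complex.ofReal_re, Complex.I_im, Complex.ofReal_im, Complex.I_re,
    mul_zero, mul_one, zero_mul, add_zero, Complex.add_im, Complex.intCast_im, Complex.intCast_re,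
    Complex.mul_re, Complex.ofReal_mul, Complex.re_ofNat, Complex.im_ofNat] at him
  -- him should say x = y + k * (2 * π)
  have hπ := Real.pi_gt_three
  obtain ⟨hx0, hx1⟩ := hx
  obtain ⟨hy0, hy1⟩ := hy
  have hk0 : k = 0 := by
    rcases lt_trichotomy k 0 with h | h | h
    · exfalso
      have hk1 : k ≤ -1 := by omega
      have : (k : ℝ) ≤ -1 := by exact_mod_cast hk1
      nlinarith
    · exact h
    · exfalso
      have : (1 : ℝ) ≤ (k : ℝ) := by exact_mod_cast h
      nlinarith
  rw [hk0] at him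
  simp at him
  exact him

/-- Trigonometric polynomial that equals `1` on the circle has delta coefficients. -/
lemma interp_of_poly (φ : ℝ → ℝ) (hφs : HasCompactSupport φ)
    (hQ : ∀ θ : ℝ, ∑ᶠ n : ℤ, Gc φ n * Complex.exp ((θ : ℂ) * Complex.I) ^ (n : ℤ) = 1) :
    ∀ n : ℤ, φ (n : ℝ) = if n = 0 then 1 else 0 := by
  classical
  have hG := Gc_support_finite φ hφs
  set N : ℕ := hG.toFinset.sup Int.natAbs + 1 with hN
  have hbound : ∀ n : ℤ, Gc φ n ≠ 0 → n.natAbs < N := by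
    intro n hn
    have : n.natAbs ≤ hG.toFinset.sup Int.natAbs :=
      Finset.le_sup (f := Int.natAbs) (hG.mem_toFinset.2 hn)
    omega
  set p : Polynomial ℂ := (∑ n ∈ Finset.Icc (-(N : ℤ)) (N : ℤ),
      Polynomial.C (Gc φ n) * Polynomial.X ^ (n + N).toNat) - Polynomial.X ^ N with hp
  have hroot : ∀ θ ∈ Set.Ioo (0 : ℝ) 1,
      Polynomial.IsRoot p (Complex.exp ((θ : ℂ) * Complex.I)) := by
    intro θ _
    set u := Complex.exp ((θ : ℂ) * Complex.I) with hu
    have hu0 : u ≠ 0 := Complex.exp_ne_zero _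
    have hterm : ∀ n ∈ Finset.Icc (-(N : ℤ)) (N : ℤ),
        Gc φ n * u ^ (n + N).toNat = (Gc φ n * u ^ (n : ℤ)) * u ^ (N : ℕ) := by
      intro n hn
      have hn' : -(N : ℤ) ≤ n := (Finset.mem_Icc.mp hn).1
      have h1 : u ^ (n + N).toNat = u ^ (n : ℤ) * u ^ (N : ℕ) := by
        rw [← zpow_natCast u (n + N).toNat, Int.toNat_of_nonneg (by omega),
          zpow_add₀ hu0, zpow_natCast]
      rw [h1, mul_assoc]
    have hsum : ∑ n ∈ Finset.Icc (-(N : ℤ)) (N : ℤ), Gc φ n * u ^ (n : ℤ)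
        = ∑ᶠ n : ℤ, Gc φ n * u ^ (n : ℤ) := by
      symm
      apply finsum_eq_finset_sum_of_support_subset
      intro n hn
      have : Gc φ n ≠ 0 := by
        intro h0
        apply hn
        simp only [Function.mem_support] at hn ⊢
        exact absurd (by rw [h0, zero_mul]) hn
      have := hbound n this
      simp only [Finset.coe_Icc, Set.mem_Icc]
      omega
    have heval : Polynomial.eval u p = 0 := by
      rw [hp]
      simp only [Polynomial.eval_sub, Polynomial.eval_finset_sum, Polynomial.eval_mul,
        Polynomial.eval_C, Polynomial.eval_pow, Polynomial.eval_X]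
      rw [Finset.sum_congr rfl hterm, ← Finset.sum_mul, hsum, hQ θ, one_mul, sub_self]
    exact heval
  have hinf : {x : ℂ | Polynomial.IsRoot p x}.Infinite := by
    apply Set.Infinite.mono (s := (fun θ : ℝ => Complex.exp ((θ : ℂ) * Complex.I)) ''
      Set.Ioo (0 : ℝ) 1)
    · rintro x ⟨θ, hθ, rfl⟩
      exact hroot θ hθ
    · exact (Set.Ioo_infinite (by norm_num)).image exp_injOn_Ioo
  have hp0 : p = 0 := Polynomial.eq_zero_of_infinite_isRoot p hinf
  have hGdelta : ∀ n : ℤ, Gc φ n = if n = 0 then 1 else 0 := by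
    intro n
    by_cases hcase : n.natAbs < N
    · have hcoeff := congrArg (fun q => Polynomial.coeff q ((n + N).toNat)) hp0
      simp only [hp, Polynomial.coeff_sub, Polynomial.finset_sum_coeff, Polynomial.coeff_C_mul,
        Polynomial.coeff_X_pow, Polynomial.coeff_zero, mul_ite, mul_one, mul_zero] at hcoeff
      rw [Finset.sum_eq_single n ?_ ?_] at hcoeff
      · have hifN : ((n + (N : ℤ)).toNat = N) ↔ (n = 0) := by omega
        rw [if_pos rfl] at hcoeff
        by_cases hn0 : n = 0
        · rw [if_pos (hifN.mpr hn0)] at hcoeff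
          rw [if_pos hn0]
          exact sub_eq_zero.mp hcoeff
        · rw [if_neg (fun h => hn0 (hifN.mp h))] at hcoeff
          rw [if_neg hn0]
          simpa using hcoeff
      · intro b hb hbn
        have hb' := Finset.mem_Icc.mp hb
        rw [if_neg (by omega : ¬((n + (N : ℤ)).toNat = (b + (N : ℤ)).toNat))]
      · intro hnot
        exfalso
        apply hnot
        rw [Finset.mem_Icc]
        omega
    · have h0 : Gc φ n = 0 := by
        by_contra h
        exact hcase (hbound n h)
      have hn0 : n ≠ 0 := by
        rintro rfl
        exact hcase (by simp [hN])
      rw [h0, if_neg hn0]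
  intro n
  have := hGdelta n
  simp only [Gc] at this
  by_cases hn0 : n = 0
  · rw [if_pos hn0] at this ⊢
    exact_mod_cast this
  · rw [if_neg hn0] at this ⊢
    exact_mod_cast this

theorem main_even
    (lam : ℕ) (hlam : 2 ≤ lam) (m : ℕ) (hm : m = 2 * lam)
    (a : ℤ → ℝ) (ha : (Function.support a).Finite)
    (φ : ℝ → ℝ) (hφc : Continuous φ) (hφs : HasCompactSupport φ)
    (href : ∀ x : ℝ, φ x = ∑ᶠ k : ℤ, a k * φ ((m : ℝ) * x - (k : ℝ) + 1 / 2)) :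
    (∀ n : ℤ, φ (n : ℝ) = if n = 0 then 1 else 0) ↔
      (∀ ω : ℝ, ∀ z : ℂ, z = Complex.exp (-((Real.pi : ℂ) * Complex.I * (ω : ℂ))) →
        1 / 2 + ∑ γ ∈ Finset.range m, PhiSub φ m 2 (2 * (γ : ℤ) + 1) (z ^ m) =
          (m : ℂ) * z⁻¹ *
            ∑ γ ∈ Finset.range m,
              (ASub a m ((lam : ℤ) - (γ : ℤ)) (z ^ 2) + ASub a m ((m : ℤ) - (γ : ℤ)) (z ^ 2)) *
                PhiSub φ m 2 (2 * (γ : ℤ) + 1) z) := by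
  have hm0 : 0 < m := by omega
  have hmC : (m : ℂ) ≠ 0 := by exact_mod_cast (by omega : (m : ℕ) ≠ 0)
  have hkey : ∀ z : ℂ, z ≠ 0 →
      ((1 / 2 + ∑ γ ∈ Finset.range m, PhiSub φ m 2 (2 * (γ : ℤ) + 1) (z ^ m) =
          (m : ℂ) * z⁻¹ *
            ∑ γ ∈ Finset.range m,
              (ASub a m ((lam : ℤ) - (γ : ℤ)) (z ^ 2) + ASub a m ((m : ℤ) - (γ : ℤ)) (z ^ 2)) *
                PhiSub φ m 2 (2 * (γ : ℤ) + 1) z)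
        ↔ ∑ᶠ n : ℤ, Gc φ n * z ^ (2 * (m : ℤ) * n) = 1) := by
    intro z hz
    have hsplit : ∑ γ ∈ Finset.range m,
        (ASub a m ((lam : ℤ) - (γ : ℤ)) (z ^ 2) + ASub a m ((m : ℤ) - (γ : ℤ)) (z ^ 2)) *
          PhiSub φ m 2 (2 * (γ : ℤ) + 1) z
        = (∑ γ ∈ Finset.range m,
            ASub a m ((lam : ℤ) - (γ : ℤ)) (z ^ 2) * PhiSub φ m 2 (2 * (γ : ℤ) + 1) z)
          + ∑ γ ∈ Finset.range m,
            ASub a m ((m : ℤ) - (γ : ℤ)) (z ^ 2) * PhiSub φ m 2 (2 * (γ : ℤ) + 1) z := by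
      rw [← Finset.sum_add_distrib]
      exact Finset.sum_congr rfl fun γ _ => add_mul _ _ _
    have hD1 : (m : ℂ) * z⁻¹ * ∑ γ ∈ Finset.range m,
        ASub a m ((lam : ℤ) - (γ : ℤ)) (z ^ 2) * PhiSub φ m 2 (2 * (γ : ℤ) + 1) z
        = (2 : ℂ)⁻¹ * ∑ᶠ s : ℤ, Fc φ s * z ^ ((m : ℤ) * (2 * s + 1)) := by
      rw [Dlemma m hm0 a ha φ hφs z hz (lam : ℤ)]
      congr 1
      apply finsum_congr
      intro s
      rw [refine_half m lam hm a ha φ href s]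
      have h2 : (m : ℤ) = 2 * (lam : ℤ) := by exact_mod_cast hm
      congr 2
      rw [h2]; ring
    have hD2 : (m : ℂ) * z⁻¹ * ∑ γ ∈ Finset.range m,
        ASub a m ((m : ℤ) - (γ : ℤ)) (z ^ 2) * PhiSub φ m 2 (2 * (γ : ℤ) + 1) z
        = (2 : ℂ)⁻¹ * ∑ᶠ n : ℤ, Gc φ n * z ^ (2 * (m : ℤ) * n) := by
      rw [Dlemma m hm0 a ha φ hφs z hz (m : ℤ)]
      congr 1
      rw [← finsum_int_shift (fun n => Gc φ n * z ^ (2 * (m : ℤ) * n)) 1]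
      apply finsum_congr
      intro s
      rw [refine_int m a ha φ href s]
      congr 2
      ring
    rw [claim1 φ hφs m hm0 z, hsplit, mul_add, hD1, hD2]
    constructor
    · intro h
      linear_combination (-2 : ℂ) * h
    · intro h
      linear_combination (-(1 / 2) : ℂ) * h
  constructor
  · intro hint ω z hzdef
    have hz : z ≠ 0 := by rw [hzdef]; exact Complex.exp_ne_zero _
    apply (hkey z hz).mpr
    have hzero : ∀ n : ℤ, n ≠ 0 → Gc φ n * z ^ (2 * (m : ℤ) * n) = 0 := by
      intro n hn
      simp [Gc, hint n, hn]
    rw [finsum_eq_single _ 0 hzero]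
    have h0 : φ (0 : ℝ) = 1 := by
      have := hint 0
      norm_num at this
      exact this
    simp [Gc, h0]
  · intro heq n
    refine interp_of_poly φ hφs (fun θ => ?_) n
    set ω : ℝ := -θ / (Real.pi * 2 * m) with hω
    have hz := heq ω (Complex.exp (-((Real.pi : ℂ) * Complex.I * (ω : ℂ)))) rfl
    have hz0 : Complex.exp (-((Real.pi : ℂ) * Complex.I * (ω : ℂ))) ≠ 0 := Complex.exp_ne_zero _
    have hQ := (hkey _ hz0).mp hz
    rw [← hQ]
    apply finsum_congr
    intro k
    congr 1
    rw [← Complex.exp_int_mul, ← Complex.exp_int_mul]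
    congr 1
    have hπ : (Real.pi : ℂ) ≠ 0 := by exact_mod_cast Real.pi_ne_zero
    rw [hω]
    push_cast
    field_simp

/-- Theorem 3.2, even arity `m = 2λ ≥ 4`: `φ` is interpolatory iff
`1/2 + Σ_γ Φ_{2,2γ+1}(z^m) = m z⁻¹ Σ_γ (A_{m/2-γ}(z²) + A_{m-γ}(z²)) Φ_{2,2γ+1}(z)`
for all `ω ∈ ℝ`, `z = e^{-πiω}`.  Here `m/2 = λ`. -/
theorem dual_interpolatory_characterization_even
    (lam : ℕ) (hlam : 2 ≤ lam) (m : ℕ) (hm : m = 2 * lam)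
    (a : ℤ → ℝ) (ha : (Function.support a).Finite)
    (φ : ℝ → ℝ) (hφc : Continuous φ) (hφs : HasCompactSupport φ)
    (href : ∀ x : ℝ, φ x = ∑ᶠ k : ℤ, a k * φ ((m : ℝ) * x - (k : ℝ) + 1 / 2))
    (hdecay : ∃ C ε : ℝ, 0 < C ∧ 0 < ε ∧
      ∀ x : ℝ, |φ x| + ‖fourierT φ x‖ ≤ C * (1 + |x|) ^ (-1 - ε)) :
    (∀ n : ℤ, φ (n : ℝ) = if n = 0 then 1 else 0) ↔
      (∀ ω : ℝ, ∀ z : ℂ, z = Complex.exp (-((Real.pi : ℂ) * Complex.I * (ω : ℂ))) →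
        1 / 2 + ∑ γ ∈ Finset.range m, PhiSub φ m 2 (2 * (γ : ℤ) + 1) (z ^ m) =
          (m : ℂ) * z⁻¹ *
            ∑ γ ∈ Finset.range m,
              (ASub a m ((lam : ℤ) - (γ : ℤ)) (z ^ 2) + ASub a m ((m : ℤ) - (γ : ℤ)) (z ^ 2)) *
                PhiSub φ m 2 (2 * (γ : ℤ) + 1) z) := by
  exact main_even lam hlam m hm a ha φ hφc hφs href
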